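/- Let I be a monomial ideal of E with linear quotients whose decomposition function g is regular (i.e., set(g(e_s·u)) ⊆ set(u) for all u ∈ G(I) and all s ∈ set(u) \ supp(u)). Then g(e_s·g(e_t·u)) = g(e_t·g(e_s·u)) for all u ∈ M(I) and all s, t ∈ set(u) with s, t ∉ supp(u). -/

import Mathlib

open ExteriorAlgebra

/-- The `i`-th basis monomial `e_i` of the exterior algebra `E = K⟨e_1,…,e_n⟩`. -/
noncomputable def e (K : Type) [Field K] {n : ℕ} (i : Fin n) :
    ExteriorAlgebra K (Fin n → K) :=
  ι K (Pi.single i 1)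

/-- The monomial `e_μ = e_{i_1} ∧ ⋯ ∧ e_{i_d}` for `μ = {i_1 < ⋯ < i_d}`. -/
noncomputable def eMon (K : Type) [Field K] {n : ℕ} (μ : Finset (Fin n)) :
    ExteriorAlgebra K (Fin n → K) :=
  ((μ.sort (· ≤ ·)).map (e K)).prod

/-- The ideal `(u_1, …, u_j)` generated by the monomials `u_i = e_{μ_i}`, `i ≤ j`. -/
noncomputable def Iupto (K : Type) [Field K] {n r : ℕ}
    (μs : Fin r → Finset (Fin n)) (j : Fin r) :
    Ideal (ExteriorAlgebra K (Fin n → K)) :=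
  Ideal.span {v | ∃ i, i ≤ j ∧ v = eMon K (μs i)}

/-- The ideal `(u_1, …, u_{j-1})` generated by the monomials `u_i = e_{μ_i}`, `i < j`. -/
noncomputable def Ibelow (K : Type) [Field K] {n r : ℕ}
    (μs : Fin r → Finset (Fin n)) (j : Fin r) :
    Ideal (ExteriorAlgebra K (Fin n → K)) :=
  Ideal.span {v | ∃ i, i < j ∧ v = eMon K (μs i)}

/-- `set(u_j) = {k : e_k ∈ (u_1,…,u_{j-1}) : (u_j)}`. -/
noncomputable def setIdx (K : Type) [Field K] {n r : ℕ}
    (μs : Fin r → Finset (Fin n)) (j : Fin r) : Set (Fin n) :=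
  {k | e K k * eMon K (μs j) ∈ Ibelow K μs j}

/-- The monomial ideal generated by `u_1, …, u_r` has linear quotients with
respect to this order: each colon ideal `(u_1,…,u_{j-1}) : (u_j)` is generated
by a subset of the variables `e_1, …, e_n`. -/
def LinearQuotients (K : Type) [Field K] {n r : ℕ}
    (μs : Fin r → Finset (Fin n)) : Prop :=
  ∀ j : Fin r, ∃ S : Finset (Fin n),
    {f : ExteriorAlgebra K (Fin n → K) | f * eMon K (μs j) ∈ Ibelow K μs j}
      = (Ideal.span {v | ∃ k ∈ S, v = e K k} : Set (ExteriorAlgebra K (Fin n → K)))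

/-- `g(e_ν) = u_j`: `j` is the least index with `e_ν ∈ (u_1, …, u_j)`. -/
noncomputable def IsDecomp (K : Type) [Field K] {n r : ℕ}
    (μs : Fin r → Finset (Fin n)) (ν : Finset (Fin n)) (j : Fin r) : Prop :=
  eMon K ν ∈ Iupto K μs j ∧ ∀ i, i < j → eMon K ν ∉ Iupto K μs i


variable {K : Type} [Field K] {n : ℕ}

noncomputable def eList (K : Type) [Field K] {n : ℕ} (l : List (Fin n)) :
    ExteriorAlgebra K (Fin n → K) := (l.map (e K)).prod

lemma eMon_eq_eList (μ : Finset (Fin n)) : eMon K μ = eList K (μ.sort (· ≤ ·)) := rfl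

lemma eList_append (l l' : List (Fin n)) : eList K (l ++ l') = eList K l * eList K l' := by
  simp [eList]

lemma e_anticomm (i j : Fin n) : e K i * e K j = -(e K j * e K i) := by
  have := ι_add_mul_swap (R := K) (Pi.single i 1 : Fin n → K) (Pi.single j 1)
  unfold e
  exact eq_neg_of_add_eq_zero_left this

lemma e_sq (i : Fin n) : e K i * e K i = 0 := ι_sq_zero _

lemma eList_perm {l l' : List (Fin n)} (h : l.Perm l') :
    ∃ ε : ℤˣ, eList K l = (ε : ℤ) • eList K l' := by
  induction h with
  | nil => exact ⟨1, by simp⟩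
  | cons x _ ih =>
      obtain ⟨ε, hε⟩ := ih
      refine ⟨ε, ?_⟩
      simp only [eList, List.map_cons, List.prod_cons] at hε ⊢
      rw [hε, mul_smul_comm]
  | swap x y l =>
      refine ⟨-1, ?_⟩
      simp only [eList, List.map_cons, List.prod_cons, ← mul_assoc]
      rw [e_anticomm y x]
      simp
  | trans _ _ ih1 ih2 =>
      obtain ⟨ε1, h1⟩ := ih1
      obtain ⟨ε2, h2⟩ := ih2
      exact ⟨ε1 * ε2, by rw [h1, h2, smul_smul]; norm_cast⟩

lemma eList_of_not_nodup {l : List (Fin n)} (h : ¬ l.Nodup) : eList K l = 0 := by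
  obtain ⟨x, hx⟩ := List.exists_duplicate_iff_not_nodup.2 h
  have hmem := hx.mem
  have hmem2 : x ∈ l.erase x := by
    have h2 : 2 ≤ List.count x l := List.duplicate_iff_two_le_count.1 hx
    have : 1 ≤ List.count x (l.erase x) := by
      rw [List.count_erase_self]
      omega
    exact List.count_pos_iff.1 this
  have hperm : l.Perm (x :: (l.erase x)) := List.perm_cons_erase hmem
  have hperm2 : (l.erase x).Perm (x :: ((l.erase x).erase x)) := List.perm_cons_erase hmem2
  have : l.Perm (x :: x :: ((l.erase x).erase x)) := hperm.trans (hperm2.cons x)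
  obtain ⟨ε, hε⟩ := eList_perm (K := K) this
  rw [hε]
  simp only [eList, List.map_cons, List.prod_cons, ← mul_assoc, e_sq, zero_mul, smul_zero]

lemma eMon_mul {σ τ : Finset (Fin n)} (h : Disjoint σ τ) :
    ∃ ε : ℤˣ, eMon K σ * eMon K τ = (ε : ℤ) • eMon K (σ ∪ τ) := by
  have hperm : (σ.sort (· ≤ ·) ++ τ.sort (· ≤ ·)).Perm ((σ ∪ τ).sort (· ≤ ·)) := by
    apply List.perm_of_nodup_nodup_toFinset_eq
    · rw [List.nodup_append]
      refine ⟨σ.sort_nodup _, τ.sort_nodup _, ?_⟩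
      intro a ha b hb hab
      rw [Finset.mem_sort] at ha hb
      exact (Finset.disjoint_left.1 h ha) (by subst hab; exact hb)
    · exact Finset.sort_nodup _ _
    · ext a
      simp [Finset.mem_union]
  obtain ⟨ε, hε⟩ := eList_perm (K := K) hperm
  exact ⟨ε, by rw [eMon_eq_eList, eMon_eq_eList, eMon_eq_eList, ← eList_append, hε]⟩

lemma eList_eq_iotaMulti (l : List (Fin n)) :
    eList K l = ιMulti K l.length (fun i => (Pi.single (l.get i) 1 : Fin n → K)) := by
  rw [ιMulti_apply]
  conv_lhs => rw [eList, ← List.ofFn_get l, List.map_ofFn]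
  rfl

lemma eList_nodup_ne_zero {l : List (Fin n)} (hl : l.Nodup) : eList K l ≠ 0 := by
  set d := l.length with hd
  set v : Fin d → (Fin n → K) := fun i => (Pi.single (l.get i) 1 : Fin n → K) with hv
  set T : (Fin n → K) →ₗ[K] (Fin d → K) := LinearMap.funLeft K K (fun i => l.get i) with hT
  set F : (Fin n → K) [⋀^Fin d]→ₗ[K] K :=
    ((Pi.basisFun K (Fin d)).det).compLinearMap T with hF
  set f : ∀ i : ℕ, (Fin n → K) [⋀^Fin i]→ₗ[K] K :=
    Function.update (fun i => (0 : (Fin n → K) [⋀^Fin i]→ₗ[K] K)) d F with hf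
  intro h0
  have h1 : liftAlternating (R := K) f (eList K l) = 1 := by
    rw [eList_eq_iotaMulti, liftAlternating_apply_ιMulti]
    have hfd : f d = F := Function.update_self _ _ _
    have h2 : f l.length v = F v := congrArg (fun g => g v) hfd
    rw [h2]
    have hTv : (fun i => T (v i)) = ⇑(Pi.basisFun K (Fin d)) := by
      funext i
      funext a
      simp only [hT, hv, LinearMap.funLeft_apply, Function.comp_apply, Pi.basisFun_apply]
      simp only [Pi.single_apply]
      by_cases hai : a = i
      · simp [hai]
      · have hne : l.get a ≠ l.get i := fun hgl => hai ((List.nodup_iff_injective_get.1 hl) hgl)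
        simp only [List.get_eq_getElem] at hne
        simp [hai, hne]
    rw [hF, AlternatingMap.compLinearMap_apply]
    rw [hTv]
    exact (Pi.basisFun K (Fin d)).det_self
  rw [h0, map_zero] at h1
  exact one_ne_zero h1.symm

lemma eMon_ne_zero (σ : Finset (Fin n)) : eMon K σ ≠ 0 :=
  eList_nodup_ne_zero (Finset.sort_nodup _ _)

noncomputable def projA (K : Type) [Field K] {n : ℕ} (ρ : Finset (Fin n)) :
    ExteriorAlgebra K (Fin n → K) →ₐ[K] ExteriorAlgebra K (Fin n → K) :=
  map (LinearMap.pi (fun k => if k ∈ ρ then LinearMap.proj k else 0))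

lemma projA_e (ρ : Finset (Fin n)) (k : Fin n) :
    projA K ρ (e K k) = if k ∈ ρ then e K k else 0 := by
  unfold projA e
  rw [map_apply_ι]
  by_cases hk : k ∈ ρ
  · rw [if_pos hk]
    congr 1
    funext j
    rw [LinearMap.pi_apply]
    by_cases hj : j ∈ ρ
    · simp [hj]
    · have : j ≠ k := fun hh => hj (hh ▸ hk)
      simp [hj, Pi.single_apply, this]
  · rw [if_neg hk]
    have : (LinearMap.pi (fun k => if k ∈ ρ then (LinearMap.proj k : (Fin n → K) →ₗ[K] K) else 0))
        (Pi.single k 1) = 0 := by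
      funext j
      rw [LinearMap.pi_apply]
      by_cases hj : j ∈ ρ
      · have : j ≠ k := fun hh => hk (hh ▸ hj)
        simp [hj, Pi.single_apply, this]
      · simp [hj]
    rw [this, map_zero]

lemma projA_eMon_of_subset {ρ σ : Finset (Fin n)} (h : σ ⊆ ρ) :
    projA K ρ (eMon K σ) = eMon K σ := by
  rw [eMon, map_list_prod, List.map_map]
  congr 1
  refine List.map_congr_left (fun k hk => ?_)
  rw [Finset.mem_sort] at hk
  simp only [Function.comp_apply, projA_e, if_pos (h hk)]

lemma projA_eMon_of_not_subset {ρ σ : Finset (Fin n)} (h : ¬ σ ⊆ ρ) :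
    projA K ρ (eMon K σ) = 0 := by
  obtain ⟨k, hkσ, hkρ⟩ := Finset.not_subset.1 h
  rw [eMon, map_list_prod, List.map_map]
  apply List.prod_eq_zero
  refine List.mem_map.2 ⟨k, (Finset.mem_sort _).2 hkσ, ?_⟩
  simp only [Function.comp_apply, projA_e, if_neg hkρ]

lemma eMon_mem_span {ι : Type*} (f : ι → Finset (Fin n)) (p : ι → Prop) (ρ : Finset (Fin n)) :
    eMon K ρ ∈ Ideal.span {v | ∃ i, p i ∧ v = eMon K (f i)} ↔ ∃ i, p i ∧ f i ⊆ ρ := by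
  constructor
  · intro hmem
    by_contra hno
    push_neg at hno
    have key : ∀ x ∈ Ideal.span {v | ∃ i, p i ∧ v = eMon K (f i)}, projA K ρ x = 0 := by
      intro x hx
      induction hx using Submodule.span_induction with
      | mem x hx =>
          obtain ⟨i, hpi, rfl⟩ := hx
          exact projA_eMon_of_not_subset (hno i hpi)
      | zero => exact map_zero _
      | add x y _ _ hx hy => rw [map_add, hx, hy, add_zero]
      | smul r x _ hx => rw [smul_eq_mul, map_mul, hx, mul_zero]
    have hzero := key _ hmem
    rw [projA_eMon_of_subset (le_refl ρ)] at hzero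
    exact eMon_ne_zero ρ hzero
  · rintro ⟨i, hpi, hsub⟩
    have hd : Disjoint (ρ \ f i) (f i) := Finset.sdiff_disjoint
    obtain ⟨ε, hε⟩ := eMon_mul (K := K) hd
    rw [Finset.sdiff_union_of_subset hsub] at hε
    have hgen : eMon K (f i) ∈ Ideal.span {v | ∃ i, p i ∧ v = eMon K (f i)} :=
      Ideal.subset_span ⟨i, hpi, rfl⟩
    have hmul : eMon K (ρ \ f i) * eMon K (f i) ∈
        Ideal.span {v | ∃ i, p i ∧ v = eMon K (f i)} := Ideal.mul_mem_left _ _ hgen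
    rw [hε] at hmul
    rcases Int.units_eq_one_or ε with h1 | h1 <;> rw [h1] at hmul <;> simpa using hmul


section AuxTwo

variable {K : Type} [Field K] {n r : ℕ}

lemma eMon_singleton (k : Fin n) : eMon K {k} = e K k := by
  rw [eMon, Finset.sort_singleton]
  simp

lemma zsmul_unit_mem_iff {I : Ideal (ExteriorAlgebra K (Fin n → K))}
    {x : ExteriorAlgebra K (Fin n → K)} (ε : ℤˣ) : (ε : ℤ) • x ∈ I ↔ x ∈ I := by
  rcases Int.units_eq_one_or ε with h | h <;> rw [h] <;> simp

lemma mem_Iupto_iff (μs : Fin r → Finset (Fin n)) (j : Fin r) (ρ : Finset (Fin n)) :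
    eMon K ρ ∈ Iupto K μs j ↔ ∃ i, i ≤ j ∧ μs i ⊆ ρ :=
  eMon_mem_span μs (· ≤ j) ρ

lemma mem_Ibelow_iff (μs : Fin r → Finset (Fin n)) (j : Fin r) (ρ : Finset (Fin n)) :
    eMon K ρ ∈ Ibelow K μs j ↔ ∃ i, i < j ∧ μs i ⊆ ρ :=
  eMon_mem_span μs (· < j) ρ

lemma mem_span_vars_iff (S : Finset (Fin n)) (c : Finset (Fin n)) :
    eMon K c ∈ Ideal.span {v | ∃ k ∈ S, v = e K k} ↔ ∃ x ∈ c, x ∈ S := by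
  have hseteq : {v : ExteriorAlgebra K (Fin n → K) | ∃ k ∈ S, v = e K k}
      = {v | ∃ k, k ∈ S ∧ v = eMon K ({k} : Finset (Fin n))} := by
    ext v
    constructor
    · rintro ⟨k, hk, rfl⟩; exact ⟨k, hk, (eMon_singleton k).symm⟩
    · rintro ⟨k, hk, rfl⟩; exact ⟨k, hk, eMon_singleton k⟩
  rw [hseteq, eMon_mem_span (fun k : Fin n => ({k} : Finset (Fin n))) (· ∈ S) c]
  constructor
  · rintro ⟨k, hk, hsub⟩; exact ⟨k, hsub (Finset.mem_singleton_self k), hk⟩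
  · rintro ⟨x, hx, hxS⟩; exact ⟨x, hxS, Finset.singleton_subset_iff.2 hx⟩

lemma colon_iff {μs : Fin r → Finset (Fin n)} (hlq : LinearQuotients K μs) (j : Fin r)
    (c : Finset (Fin n)) :
    eMon K c * eMon K (μs j) ∈ Ibelow K μs j ↔ ∃ x ∈ c, x ∈ setIdx K μs j := by
  obtain ⟨S, hS⟩ := hlq j
  have hmem : ∀ f : ExteriorAlgebra K (Fin n → K),
      f * eMon K (μs j) ∈ Ibelow K μs j ↔
        f ∈ Ideal.span {v | ∃ k ∈ S, v = e K k} := by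
    intro f
    have := Set.ext_iff.1 hS f
    simpa using this
  have hset : ∀ k, k ∈ setIdx K μs j ↔ k ∈ S := by
    intro k
    have : k ∈ setIdx K μs j ↔ e K k * eMon K (μs j) ∈ Ibelow K μs j := Iff.rfl
    rw [this, hmem, ← eMon_singleton k, mem_span_vars_iff]
    simp
  rw [hmem, mem_span_vars_iff]
  exact exists_congr fun x => and_congr_right fun _ => (hset x).symm

lemma mem_Ibelow_iff_sdiff {μs : Fin r → Finset (Fin n)} (hlq : LinearQuotients K μs)
    (j : Fin r) {ρ : Finset (Fin n)} (hsub : μs j ⊆ ρ) :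
    eMon K ρ ∈ Ibelow K μs j ↔ ∃ x ∈ ρ \ μs j, x ∈ setIdx K μs j := by
  obtain ⟨ε, hε⟩ := eMon_mul (K := K) (Finset.sdiff_disjoint (t := ρ) (s := μs j))
  rw [Finset.sdiff_union_of_subset hsub] at hε
  rw [← zsmul_unit_mem_iff (I := Ibelow K μs j) ε, ← hε, colon_iff hlq]

lemma isDecomp_iff {μs : Fin r → Finset (Fin n)} (hlq : LinearQuotients K μs)
    (ρ : Finset (Fin n)) (j : Fin r) :
    IsDecomp K μs ρ j ↔
      (μs j ⊆ ρ ∧ ∀ x ∈ ρ, x ∉ μs j → x ∉ setIdx K μs j) := by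
  constructor
  · rintro ⟨h1, h2⟩
    obtain ⟨i, hij, hisub⟩ := (mem_Iupto_iff μs j ρ).1 h1
    have hij' : i = j := by
      rcases lt_or_eq_of_le hij with h | h
      · exact absurd ((mem_Iupto_iff μs i ρ).2 ⟨i, le_refl i, hisub⟩) (h2 i h)
      · exact h
    subst hij'
    refine ⟨hisub, fun x hx hxμ hxset => ?_⟩
    have hbelow : eMon K ρ ∈ Ibelow K μs i :=
      (mem_Ibelow_iff_sdiff hlq i hisub).2 ⟨x, Finset.mem_sdiff.2 ⟨hx, hxμ⟩, hxset⟩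
    obtain ⟨k, hk, hksub⟩ := (mem_Ibelow_iff μs i ρ).1 hbelow
    exact (h2 k hk) ((mem_Iupto_iff μs k ρ).2 ⟨k, le_refl k, hksub⟩)
  · rintro ⟨h1, h2⟩
    refine ⟨(mem_Iupto_iff μs j ρ).2 ⟨j, le_refl j, h1⟩, fun i hi hmem => ?_⟩
    obtain ⟨k, hk, hksub⟩ := (mem_Iupto_iff μs i ρ).1 hmem
    have hbelow : eMon K ρ ∈ Ibelow K μs j :=
      (mem_Ibelow_iff μs j ρ).2 ⟨k, lt_of_le_of_lt hk hi, hksub⟩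
    obtain ⟨x, hx, hxset⟩ := (mem_Ibelow_iff_sdiff hlq j h1).1 hbelow
    obtain ⟨hx1, hx2⟩ := Finset.mem_sdiff.1 hx
    exact h2 x hx1 hx2 hxset

lemma isDecomp_unique {μs : Fin r → Finset (Fin n)} {ρ : Finset (Fin n)} {j j' : Fin r}
    (h : IsDecomp K μs ρ j) (h' : IsDecomp K μs ρ j') : j = j' := by
  rcases lt_trichotomy j j' with hlt | heq | hlt
  · exact absurd h.1 (h'.2 j hlt)
  · exact heq
  · exact absurd h'.1 (h.2 j' hlt)

end AuxTwo

/-- Let `I` have linear quotients with decomposition function `g`. Suppose `g`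
is regular: `set(g(e_s·u)) ⊆ set(u)` for all `u ∈ G(I)` and all
`s ∈ set(u) \ supp(u)`. Then `g(e_s·g(e_t·u)) = g(e_t·g(e_s·u))` for every
monomial `u = e_ν ∈ M(I)` (with `g(u) = u_{ju}`) and all `s, t ∈ set(u)` with
`s, t ∉ supp(u)`. The values of `g` are encoded by `IsDecomp` (least index). -/
theorem stmt18 {K : Type} [Field K] {n r : ℕ} (μs : Fin r → Finset (Fin n))
    (hlq : LinearQuotients K μs)
    -- regularity of the decomposition function
    (hreg : ∀ l : Fin r, ∀ s : Fin n, s ∈ setIdx K μs l → s ∉ μs l →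
      ∀ l' : Fin r, IsDecomp K μs (insert s (μs l)) l' →
        setIdx K μs l' ⊆ setIdx K μs l)
    (ν : Finset (Fin n)) (ju : Fin r) (hju : IsDecomp K μs ν ju)
    (s t : Fin n)
    (hs : s ∈ setIdx K μs ju) (ht : t ∈ setIdx K μs ju)
    (hsν : s ∉ ν) (htν : t ∉ ν)
    (jt js : Fin r)
    (hjt : IsDecomp K μs (insert t ν) jt) (hjs : IsDecomp K μs (insert s ν) js)
    (hst : s ∉ μs jt) (hts : t ∉ μs js)
    (jst jts : Fin r)
    (hjst : IsDecomp K μs (insert s (μs jt)) jst)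
    (hjts : IsDecomp K μs (insert t (μs js)) jts) :
    μs jst = μs jts := by
  by_cases hstt : s = t
  · subst hstt
    have h1 : jt = js := isDecomp_unique hjt hjs
    subst h1
    exact congrArg μs (isDecomp_unique hjst hjts)
  · have main : ∀ (a b : Fin n) (jb jab : Fin r), a ≠ b →
        IsDecomp K μs (insert b ν) jb → a ∉ μs jb →
        IsDecomp K μs (insert a (μs jb)) jab →
        IsDecomp K μs (insert a (insert b ν)) jab := by
      intro a b jb jab hab hjb hajb hjab
      obtain ⟨hjb1, hjb2⟩ := (isDecomp_iff hlq _ _).1 hjb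
      obtain ⟨hjab1, hjab2⟩ := (isDecomp_iff hlq _ _).1 hjab
      refine (isDecomp_iff hlq _ _).2 ⟨hjab1.trans (Finset.insert_subset_insert a hjb1), ?_⟩
      intro x hx hxμ
      by_cases hx1 : x ∈ insert a (μs jb)
      · exact hjab2 x hx1 hxμ
      · have hxa : x ≠ a := fun h => hx1 (h ▸ Finset.mem_insert_self a (μs jb))
        have hxjb : x ∉ μs jb := fun h => hx1 (Finset.mem_insert_of_mem h)
        have hx2 : x ∈ insert b ν := by
          rcases Finset.mem_insert.1 hx with h | h
          · exact absurd h hxa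
          · exact h
        have hxset : x ∉ setIdx K μs jb := hjb2 x hx2 hxjb
        by_cases hsjb : a ∈ setIdx K μs jb
        · exact fun hmem => hxset (hreg jb a hsjb hajb jab hjab hmem)
        · have hjabeq : jab = jb := by
            refine isDecomp_unique hjab ((isDecomp_iff hlq _ _).2
              ⟨Finset.subset_insert a (μs jb), ?_⟩)
            intro y hy hyμ
            rcases Finset.mem_insert.1 hy with h | h
            · exact h ▸ hsjb
            · exact absurd h hyμ
          rw [hjabeq]
          exact hxset
    have c1 : IsDecomp K μs (insert s (insert t ν)) jst := main s t jt jst hstt hjt hst hjst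
    have c2 : IsDecomp K μs (insert t (insert s ν)) jts :=
      main t s js jts (fun h => hstt h.symm) hjs hts hjts
    rw [Finset.insert_comm] at c1
    exact congrArg μs (isDecomp_unique c1 c2)
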